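/- Bound on keys compatible with both the observed transcript and a forged message-tag pair: let M be a finite type, B = Fin b_H → ZMod 2, and F a nonempty finite ε-ASU₂ family of functions M → B, i.e., for all m₁ ≠ m₂ and all b₁, b₂ ∈ B, |{f ∈ F : f(m₁) = b₁ ∧ f(m₂) = b₂}| ≤ ε·|F|/2^{b_H}. Fix n ≥ 1, messages m₁, …, m_n ∈ M, tags t₁, …, t_n ∈ B, a forged message m_E ≠ m₁ and a candidate forged tag t ∈ B. Then the number of keys (f, k₁, …, k_n) ∈ F × Bⁿ satisfying t = f(m_E) + k₁ and t_i = f(m_i) + k_i for all i = 1, …, n is at most ε·|F|. -/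

import Mathlib

/-- Bound on the number of keys compatible with both the observed transcript
(m_i, t_i) and a forged message-tag pair (m_E, t) with m_E ≠ m₁, for an
ε-ASU₂ family: |S(t)| ≤ ε·|F|. -/
theorem wegman_carter_forged_keys_bound {M : Type*} [Fintype M] (bH : ℕ) (hbH : 0 < bH)
    (F : Finset (M → (Fin bH → ZMod 2))) (hF : F.Nonempty) (ε : ℝ)
    (hASU : ∀ m₁ m₂ : M, m₁ ≠ m₂ → ∀ b₁ b₂ : Fin bH → ZMod 2,
      ((F.filter (fun f => f m₁ = b₁ ∧ f m₂ = b₂)).card : ℝ) ≤ ε * F.card / 2 ^ bH)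
    (n : ℕ) (hn : 0 < n) (m : Fin n → M) (t' : Fin n → (Fin bH → ZMod 2))
    (mE : M) (hmE : mE ≠ m ⟨0, hn⟩) (t : Fin bH → ZMod 2) :
    (((F ×ˢ (Finset.univ : Finset (Fin n → (Fin bH → ZMod 2)))).filter
        (fun p => t = p.1 mE + p.2 ⟨0, hn⟩ ∧
          ∀ i : Fin n, t' i = p.1 (m i) + p.2 i)).card : ℝ)
      ≤ ε * F.card := by
  set S := F.filter (fun f => f mE - f (m ⟨0, hn⟩) = t - t' ⟨0, hn⟩) with hS
  have hcard : ((F ×ˢ (Finset.univ : Finset (Fin n → (Fin bH → ZMod 2)))).filter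
        (fun p => t = p.1 mE + p.2 ⟨0, hn⟩ ∧
          ∀ i : Fin n, t' i = p.1 (m i) + p.2 i)).card ≤ S.card := by
    apply Finset.card_le_card_of_injOn (fun p => p.1)
    · intro p hp
      simp only [Finset.mem_coe, Finset.mem_filter, Finset.mem_product, Finset.mem_univ, and_true] at hp
      obtain ⟨hp1, ht, hti⟩ := hp
      refine Finset.mem_filter.mpr ⟨hp1, ?_⟩
      have h0 := hti ⟨0, hn⟩
      rw [ht, h0]
      ring
    · intro p hp q hq hpq
      have hpq : p.1 = q.1 := hpq
      simp only [Finset.mem_coe, Finset.mem_filter] at hp hq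
      have h2 : p.2 = q.2 := by
        funext i
        have hi := hp.2.2 i
        have hi' := hq.2.2 i
        have : p.1 (m i) + p.2 i = q.1 (m i) + q.2 i := by rw [← hi, ← hi']
        rw [hpq] at this
        exact add_left_cancel this
      exact Prod.ext hpq h2
  have hsub : S ⊆ (Finset.univ : Finset (Fin bH → ZMod 2)).biUnion
      (fun b => F.filter (fun f => f mE = (t - t' ⟨0, hn⟩) + b ∧ f (m ⟨0, hn⟩) = b)) := by
    intro f hf
    simp only [hS, Finset.mem_filter] at hf
    refine Finset.mem_biUnion.mpr ⟨f (m ⟨0, hn⟩), Finset.mem_univ _, ?_⟩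
    refine Finset.mem_filter.mpr ⟨hf.1, ?_, rfl⟩
    exact sub_eq_iff_eq_add.mp hf.2
  have hle : (S.card : ℝ) ≤ ε * F.card := by
    have h1 : S.card ≤ ∑ b : Fin bH → ZMod 2,
        (F.filter (fun f => f mE = (t - t' ⟨0, hn⟩) + b ∧ f (m ⟨0, hn⟩) = b)).card :=
      le_trans (Finset.card_le_card hsub) (Finset.card_biUnion_le)
    have h2 : (S.card : ℝ) ≤ ∑ b : Fin bH → ZMod 2, (ε * F.card / 2 ^ bH) := by
      calc (S.card : ℝ) ≤ ∑ b : Fin bH → ZMod 2,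
          ((F.filter (fun f => f mE = (t - t' ⟨0, hn⟩) + b ∧ f (m ⟨0, hn⟩) = b)).card : ℝ) := by
            exact_mod_cast h1
        _ ≤ _ := Finset.sum_le_sum (fun b _ => hASU mE (m ⟨0, hn⟩) hmE _ b)
    have hcardB : (Fintype.card (Fin bH → ZMod 2) : ℝ) = 2 ^ bH := by
      simp [Fintype.card_fun]
    rw [Finset.sum_const, Finset.card_univ, nsmul_eq_mul] at h2
    rw [hcardB] at h2
    have h2pos : (0:ℝ) < 2 ^ bH := by positivity
    calc (S.card : ℝ) ≤ 2 ^ bH * (ε * F.card / 2 ^ bH) := h2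
      _ = ε * F.card := by field_simp
  exact le_trans (by exact_mod_cast hcard) hle
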